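/- Let K be a number field of degree n ≥ 3 with tr_{K/ℚ}(O_K) = kℤ, and let {1, α_1, …, α_{n−1}} be a ℤ-basis of O_K with traces t_i := tr(α_i) satisfying t_i ≡ 0 mod n for i ≤ n−2 and t_{n−1} ≡ k mod n. Then {α_1 − t_1/n, …, α_{n−2} − t_{n−2}/n, (n/k)·α_{n−1} − t_{n−1}/k} is a ℤ-basis of the trace-zero module O_K^0. -/

import Mathlib

open NumberField

set_option maxHeartbeats 1000000 in
/-- Given a ℤ-basis `{1, α_1, …, α_{n−1}}` of `O_K` with `t_i := tr(α_i) ≡ 0 mod n`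
for `i ≤ n−2` and `t_{n−1} ≡ k mod n`, the elements
`α_1 − t_1/n, …, α_{n−2} − t_{n−2}/n, (n/k)·α_{n−1} − t_{n−1}/k` form a ℤ-basis of
the trace-zero module `O_K^0`. -/

theorem stmt_14 (K : Type*) [Field K] [NumberField K]
    (n : ℕ) (hn : 3 ≤ n) (hdeg : Module.finrank ℚ K = n)
    (k : ℕ) (hk : 0 < k)
    (htr : LinearMap.range (Algebra.trace ℤ (𝓞 K)) = Ideal.span {(k : ℤ)})
    (b : Module.Basis (Fin n) ℤ (𝓞 K))
    (hb0 : ∀ i : Fin n, (i : ℕ) = 0 → b i = 1)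
    (hbmid : ∀ i : Fin n, 0 < (i : ℕ) → (i : ℕ) < n - 1 →
      (n : ℤ) ∣ Algebra.trace ℤ (𝓞 K) (b i))
    (hblast : ∀ i : Fin n, (i : ℕ) = n - 1 →
      (n : ℤ) ∣ Algebra.trace ℤ (𝓞 K) (b i) - k) :
    ∃ c : Module.Basis (Fin (n - 1)) ℤ (LinearMap.ker (Algebra.trace ℤ (𝓞 K))),
      (∀ i : Fin (n - 1), (i : ℕ) < n - 2 →
        (c i : 𝓞 K) = b ⟨(i : ℕ) + 1, by have := i.isLt; omega⟩ -
          (Algebra.trace ℤ (𝓞 K) (b ⟨(i : ℕ) + 1, by have := i.isLt; omega⟩) / n) •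
            (1 : 𝓞 K)) ∧
      (∀ i : Fin (n - 1), (i : ℕ) = n - 2 →
        (c i : 𝓞 K) = ((n : ℤ) / k) • b ⟨(i : ℕ) + 1, by have := i.isLt; omega⟩ -
          (Algebra.trace ℤ (𝓞 K) (b ⟨(i : ℕ) + 1, by have := i.isLt; omega⟩) / k) •
            (1 : 𝓞 K)) := by
  classical
  set T := Algebra.trace ℤ (𝓞 K) with hT
  have hn0 : 0 < n := by omega
  have htr1 : T (1 : 𝓞 K) = (n : ℤ) := by
    have := Algebra.trace_algebraMap_of_basis b (1 : ℤ)
    simpa [hT] using this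
  have hkT : ∀ x : 𝓞 K, (k : ℤ) ∣ T x := by
    intro x
    have hx : T x ∈ LinearMap.range T := ⟨x, rfl⟩
    rw [htr] at hx
    exact Ideal.mem_span_singleton.mp hx
  have hkn : (k : ℤ) ∣ (n : ℤ) := htr1 ▸ hkT 1
  set m : ℤ := (n : ℤ) / k with hm
  have hmk : (k : ℤ) * m = n := Int.mul_ediv_cancel' hkn
  have hm0 : 0 < m := by
    have h1 : (0 : ℤ) < n := by exact_mod_cast hn0
    have h2 : (0 : ℤ) < k := by exact_mod_cast hk
    nlinarith
  -- indices
  set z : Fin n := ⟨0, hn0⟩ with hz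
  have hb1 : b z = 1 := hb0 z rfl
  set idx : Fin (n - 1) → Fin n := fun i => ⟨(i : ℕ) + 1, by have := i.isLt; omega⟩ with hidx
  have hidxz : ∀ i, idx i ≠ z := by
    intro i h
    have : (i : ℕ) + 1 = 0 := congrArg Fin.val h
    omega
  have hidx_inj : Function.Injective idx := by
    intro i j h
    have : (i : ℕ) + 1 = (j : ℕ) + 1 := congrArg Fin.val h
    exact Fin.ext (by omega)
  -- the elements
  set e : Fin (n - 1) → ℤ := fun i => if (i : ℕ) < n - 2 then 1 else m with he
  set s : Fin (n - 1) → ℤ :=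
    fun i => if (i : ℕ) < n - 2 then T (b (idx i)) / n else T (b (idx i)) / k with hs
  set v : Fin (n - 1) → 𝓞 K := fun i => e i • b (idx i) - s i • (1 : 𝓞 K) with hv
  have he0 : ∀ i, e i ≠ 0 := by
    intro i
    by_cases h : (i : ℕ) < n - 2 <;> simp [he, h] <;> omega
  have hTv : ∀ i, T (v i) = 0 := by
    intro i
    have hlt := i.isLt
    rw [hv]
    simp only [map_sub, map_smul, smul_eq_mul, htr1]
    by_cases h : (i : ℕ) < n - 2
    · have hd : (n : ℤ) ∣ T (b (idx i)) := hbmid (idx i) (by simp [hidx]) (by simp [hidx]; omega)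
      simp only [he, hs, if_pos h]
      have := Int.ediv_mul_cancel hd
      linarith
    · have hd : (k : ℤ) ∣ T (b (idx i)) := hkT _
      simp only [he, hs, if_neg h]
      have h1 : T (b (idx i)) / k * k = T (b (idx i)) := Int.ediv_mul_cancel hd
      rw [← hmk]
      linear_combination (-m) * h1
  set w : Fin (n - 1) → LinearMap.ker T := fun i => ⟨v i, LinearMap.mem_ker.mpr (hTv i)⟩ with hw
  -- coordinates of v
  have hrv : ∀ i j, b.repr (v i) j =
      e i * (if idx i = j then 1 else 0) - s i * (if z = j then 1 else 0) := by
    intro i j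
    rw [hv]
    simp only
    rw [← hb1, map_sub, map_smul, map_smul, Finsupp.sub_apply, Finsupp.smul_apply,
      Finsupp.smul_apply, b.repr_self, b.repr_self, Finsupp.single_apply,
      Finsupp.single_apply, smul_eq_mul, smul_eq_mul]
  have hsum : ∀ (g : Fin (n - 1) → ℤ) (j : Fin n),
      b.repr (∑ i, g i • v i) j
        = ∑ i, g i * (e i * (if idx i = j then 1 else 0) - s i * (if z = j then 1 else 0)) := by
    intro g j
    rw [map_sum, Finsupp.finset_sum_apply]
    refine Finset.sum_congr rfl fun i _ => ?_
    rw [map_smul, Finsupp.smul_apply, hrv, smul_eq_mul]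
  -- linear independence
  have hli : LinearIndependent ℤ w := by
    rw [Fintype.linearIndependent_iff]
    intro g hg i
    have hg' : ∑ i', g i' • v i' = 0 := by
      have := congrArg (Submodule.subtype (LinearMap.ker T)) hg
      simpa [hw] using this
    have h2 := congrArg (fun y => b.repr y (idx i)) hg'
    rw [hsum] at h2
    simp only [map_zero, Finsupp.coe_zero, Pi.zero_apply] at h2
    have h3 : ∑ i', g i' * (e i' * (if idx i' = idx i then 1 else 0)
        - s i' * (if z = idx i then 1 else 0)) = g i * e i := by
      rw [Finset.sum_eq_single i]
      · simp [Ne.symm (hidxz i)]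
      · intro i' _ hne
        simp [if_neg (fun h => hne (hidx_inj h)), Ne.symm (hidxz i)]
      · simp
    rw [h3] at h2
    exact (mul_eq_zero.mp h2).resolve_right (he0 i)
  -- spanning
  have hspan : ⊤ ≤ Submodule.span ℤ (Set.range w) := by
    rintro ⟨x, hx⟩ -
    have hx0 : T x = 0 := LinearMap.mem_ker.mp hx
    set a := b.repr x with ha
    have hTx : ∑ j, a j * T (b j) = 0 := by
      have h1 : (∑ j, a j • b j) = x := b.sum_repr x
      have h2 := congrArg T h1
      rw [map_sum] at h2
      simp only [map_smul, smul_eq_mul, hx0] at h2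
      exact h2
    set last : Fin n := ⟨n - 1, by omega⟩ with hlast
    have hzlast : z ≠ last := by
      intro h
      have : (0 : ℕ) = n - 1 := congrArg Fin.val h
      omega
    have hdvd_last : m ∣ a last := by
      have hdsum : (n : ℤ) ∣ ∑ j, (a j * T (b j) - if j = last then a j * k else 0) := by
        refine Finset.dvd_sum fun j _ => ?_
        rcases eq_or_ne j z with rfl | hjz
        · rw [if_neg hzlast, hb1, htr1, sub_zero]
          exact Dvd.dvd.mul_left dvd_rfl _
        · rcases eq_or_ne j last with rfl | hjl
          · rw [if_pos rfl]
            have hbl := hblast last rfl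
            have h4 : a last * T (b last) - a last * k = a last * (T (b last) - k) := by ring
            rw [h4]
            exact Dvd.dvd.mul_left hbl _
          · rw [if_neg hjl, sub_zero]
            have hjlt := j.isLt
            have hj0 : 0 < (j : ℕ) := by
              rcases Nat.eq_zero_or_pos (j : ℕ) with h | h
              · exact absurd (Fin.ext h) hjz
              · exact h
            have hj1 : (j : ℕ) < n - 1 := by
              rcases Nat.lt_or_ge (j : ℕ) (n - 1) with h | h
              · exact h
              · exact absurd (Fin.ext (show (j : ℕ) = n - 1 by omega)) hjl
            exact Dvd.dvd.mul_left (hbmid j hj0 hj1) _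
      have hsplit : ∑ j, (a j * T (b j) - if j = last then a j * k else 0)
          = -(a last * k) := by
        rw [Finset.sum_sub_distrib, hTx, Finset.sum_ite_eq' Finset.univ last]
        simp
      rw [hsplit] at hdsum
      have h5 : (n : ℤ) ∣ a last * k := dvd_neg.mp hdsum
      rw [← hmk] at h5
      have h6 : (k : ℤ) * m ∣ (k : ℤ) * a last := by rwa [mul_comm (a last) (k : ℤ)] at h5
      have hk0 : (k : ℤ) ≠ 0 := by positivity
      exact (mul_dvd_mul_iff_left hk0).mp h6
    set g : Fin (n - 1) → ℤ :=
      fun i => if (i : ℕ) < n - 2 then a (idx i) else a (idx i) / m with hg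
    have key : x = ∑ i, g i • v i := by
      set y : 𝓞 K := x - ∑ i, g i • v i with hy
      have hcoord : ∀ j : Fin n, j ≠ z → b.repr y j = 0 := by
        intro j hj
        rw [hy, map_sub, Finsupp.sub_apply, hsum]
        have hjlt := j.isLt
        have hjv : 0 < (j : ℕ) := by
          rcases Nat.eq_zero_or_pos (j : ℕ) with h | h
          · exact absurd (Fin.ext h) hj
          · exact h
        set i0 : Fin (n - 1) := ⟨(j : ℕ) - 1, by omega⟩ with hi0
        have hidxi0 : idx i0 = j := Fin.ext (show (j : ℕ) - 1 + 1 = (j : ℕ) by omega)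
        have h3 : ∑ i, g i * (e i * (if idx i = j then 1 else 0)
            - s i * (if z = j then 1 else 0)) = g i0 * e i0 := by
          rw [Finset.sum_eq_single i0]
          · simp [if_pos hidxi0, Ne.symm hj]
          · intro i' _ hne
            have hne' : idx i' ≠ j := fun h => hne (hidx_inj (h.trans hidxi0.symm))
            simp [if_neg hne', Ne.symm hj]
          · simp
        rw [h3]
        by_cases hc : (i0 : ℕ) < n - 2
        · simp only [hg, he, if_pos hc, mul_one, hidxi0]
          rw [← ha]
          exact sub_self _
        · have hcv : ¬ ((j : ℕ) - 1 < n - 2) := hc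
          have hjl : j = last := Fin.ext (show (j : ℕ) = n - 1 by omega)
          simp only [hg, he, if_neg hc]
          rw [hidxi0, hjl, Int.ediv_mul_cancel hdvd_last, ← ha]
          exact sub_self _
      have hy1 : y = b.repr y z • (1 : 𝓞 K) := by
        have h4 : ∑ j, b.repr y j • b j = y := b.sum_repr y
        rw [Finset.sum_eq_single z (fun j _ hj => by rw [hcoord j hj, zero_smul])
          (by simp)] at h4
        rw [hb1] at h4
        exact h4.symm
      have hTy : T y = 0 := by
        rw [hy, map_sub, hx0, map_sum, zero_sub, neg_eq_zero]
        refine Finset.sum_eq_zero fun i _ => ?_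
        rw [map_smul, hTv i, smul_zero]
      rw [hy1, map_smul, htr1, smul_eq_mul] at hTy
      have hn' : (n : ℤ) ≠ 0 := by positivity
      have hz0 : b.repr y z = 0 := by
        rcases mul_eq_zero.mp hTy with h | h
        · exact h
        · exact absurd h hn'
      have hy0 : y = 0 := by rw [hy1, hz0, zero_smul]
      rw [hy] at hy0
      exact sub_eq_zero.mp hy0
    have hcoe : ((∑ i, g i • w i : LinearMap.ker T) : 𝓞 K) = ∑ i, g i • v i := by
      simp [hw]
    have hxeq : (⟨x, hx⟩ : LinearMap.ker T) = ∑ i, g i • w i :=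
      Subtype.ext (by rw [hcoe]; exact key)
    rw [hxeq]
    exact Submodule.sum_mem _ fun i _ =>
      Submodule.smul_mem _ _ (Submodule.subset_span ⟨i, rfl⟩)
  refine ⟨Module.Basis.mk hli hspan, ?_, ?_⟩
  · intro i hi
    rw [Module.Basis.mk_apply]
    show v i = _
    rw [hv]
    simp only [he, hs, if_pos hi, one_smul]
    rfl
  · intro i hi
    rw [Module.Basis.mk_apply]
    show v i = _
    have hni : ¬ ((i : ℕ) < n - 2) := by omega
    rw [hv]
    simp only [he, hs, if_neg hni]
    rfl
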